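/- For a prime integer p, the period knot (p,p)-mosaics are partitioned as follows: D_P^{(p,p)} = d_{p²} + d_{1,p} + Σ_{k=0}^{p−1} d_{p_{(k,1)}} + 7, where 7 = d_{1,1} is the number of (1,1)-f.period knot (p,p)-mosaics; in particular the classes of (1,1)-f.period, (1,p)-f.period and p_{(k,1)}-f.period mosaics (k = 0,…,p−1) are pairwise disjoint. -/

import Mathlib

/-- Connection point on the left edge, for each of the eleven mosaic tiles `T_0, …, T_10`. -/
def cpL : Fin 11 → Bool := ![false, true, false, false, true, true, false, true, true, true, true]
/-- Connection point on the right edge. -/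
def cpR : Fin 11 → Bool := ![false, false, true, true, false, true, false, true, true, true, true]
/-- Connection point on the top edge. -/
def cpT : Fin 11 → Bool := ![false, false, false, true, true, false, true, true, true, true, true]
/-- Connection point on the bottom edge. -/
def cpB : Fin 11 → Bool := ![false, true, true, false, false, false, true, true, true, true, true]

/-- An `(m,n)`-mosaic: an `m × n` matrix of mosaic tiles (row `i`, column `j`). -/
abbrev Mosaic (m n : ℕ) := Fin m → Fin n → Fin 11

/-- Suitably connected: contiguous tiles agree about connection points on their common edge. -/
def SuitablyConnected {m n : ℕ} (M : Mosaic m n) : Prop :=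
  (∀ (i : Fin m) (j : Fin n) (h : j.val + 1 < n),
      cpR (M i j) = cpL (M i ⟨j.val + 1, h⟩)) ∧
  (∀ (i : Fin m) (h : i.val + 1 < m) (j : Fin n),
      cpB (M i j) = cpT (M ⟨i.val + 1, h⟩ j))

/-- Suitably ∂-connected: tiles on opposite ends of a row (resp. column) agree about
connection points on the outer boundary edges. -/
def SuitablyBdryConnected {m n : ℕ} (M : Mosaic m n) : Prop :=
  (∀ (i : Fin m) (j j' : Fin n), j.val = 0 → j'.val = n - 1 →
      cpL (M i j) = cpR (M i j')) ∧
  (∀ (i i' : Fin m) (j : Fin n), i.val = 0 → i'.val = m - 1 →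
      cpT (M i j) = cpB (M i' j))

/-- A period knot `(m,n)`-mosaic. -/
def PeriodKnot {m n : ℕ} (M : Mosaic m n) : Prop :=
  SuitablyConnected M ∧ SuitablyBdryConnected M

/-- `D_P^{(m,n)}`, the number of period knot `(m,n)`-mosaics. -/
noncomputable def DP (m n : ℕ) : ℕ := Nat.card {M : Mosaic m n // PeriodKnot M}

/-- No connection points on the boundary of the mosaic. -/
def BoundaryFree {m n : ℕ} (M : Mosaic m n) : Prop :=
  ∀ (i : Fin m) (j : Fin n),
    (j.val = 0 → cpL (M i j) = false) ∧ (j.val = n - 1 → cpR (M i j) = false) ∧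
    (i.val = 0 → cpT (M i j) = false) ∧ (i.val = m - 1 → cpB (M i j) = false)

/-- `D^{(m,n)}`, the number of knot `(m,n)`-mosaics. -/
noncomputable def DK (m n : ℕ) : ℕ :=
  Nat.card {M : Mosaic m n // SuitablyConnected M ∧ BoundaryFree M}

/-- Subtract `x` from the index `i`, modulo `m`. -/
def shiftIdx {m : ℕ} (x : ℤ) (i : Fin m) : Fin m :=
  ⟨(((i : ℤ) - x) % (m : ℤ)).toNat, by
    have hm : (0 : ℤ) < (m : ℤ) := by exact_mod_cast i.pos
    have h1 := Int.emod_lt_of_pos ((i : ℤ) - x) hm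
    have h2 := Int.emod_nonneg ((i : ℤ) - x) (by omega : (m : ℤ) ≠ 0)
    omega⟩

/-- The cyclic rotation `t_{x,y}`: `(t_{x,y} M)_{i,j} = M_{i-x, j-y}` (indices mod `m`, `n`). -/
def tshift {m n : ℕ} (x y : ℤ) (M : Mosaic m n) : Mosaic m n :=
  fun i j => M (shiftIdx x i) (shiftIdx y j)

/-- `M` is a `(p,q)`-f.period mosaic: `p` is the least positive integer with `M = t_{p,0}(M)`
and `q` is the least positive integer with `M = t_{0,q}(M)`. -/
def IsFPeriod {m n : ℕ} (p q : ℕ) (M : Mosaic m n) : Prop :=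
  IsLeast {a : ℕ | 0 < a ∧ M = tshift (a : ℤ) 0 M} p ∧
  IsLeast {b : ℕ | 0 < b ∧ M = tshift 0 (b : ℤ) M} q

/-- `d_{p,q}`: the number of `(p,q)`-f.period knot `(m,n)`-mosaics. -/
noncomputable def dFP (m n p q : ℕ) : ℕ :=
  Nat.card {M : Mosaic m n // PeriodKnot M ∧ IsFPeriod p q M}

/-- Equivalence of period knot mosaics under cyclic rotations of rows and columns. -/
def torRel (m n : ℕ) (A B : {M : Mosaic m n // PeriodKnot M}) : Prop :=
  ∃ x y : ℤ, tshift x y A.val = B.val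

/-- `D_T^{(m,n)}`, the number of toroidal knot `(m,n)`-mosaics. -/
noncomputable def DT (m n : ℕ) : ℕ := Nat.card (Quot (torRel m n))

/-- `M` is a `p_{(k,1)}`-f.period knot `(p,p)`-mosaic: not `(1,1)`-f.period and `M = t_{k,1}(M)`. -/
def IsPk1FPeriod {p : ℕ} (k : ℕ) (M : Mosaic p p) : Prop :=
  ¬ IsFPeriod 1 1 M ∧ M = tshift (k : ℤ) 1 M

/-- `d_{p_{(k,1)}}`: the number of `p_{(k,1)}`-f.period knot `(p,p)`-mosaics. -/
noncomputable def dPk (p k : ℕ) : ℕ :=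
  Nat.card {M : Mosaic p p // PeriodKnot M ∧ IsPk1FPeriod k M}

/-- `d_{p²}`: the number of period knot `(p,p)`-mosaics that are not `(1,1)`-, not `(1,p)`-
and not `p_{(k,1)}`-f.period for any `k`. -/
noncomputable def dPsq (p : ℕ) : ℕ :=
  Nat.card {M : Mosaic p p // PeriodKnot M ∧ ¬ IsFPeriod 1 1 M ∧ ¬ IsFPeriod 1 p M ∧
    ∀ k < p, ¬ IsPk1FPeriod k M}

/-- Entries of the pair `(X_k, O_k)` of `2^k × 2^k` matrices defined by the block recursion
`X_{k+1} = [[X_k, O_k], [O_k, X_k]]`, `O_{k+1} = [[O_k, X_k], [X_k, 4 O_k]]`,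
seeded with `X_0 = O_0 = [1]` (the most significant bit selects the block). -/
def matsXO : ℕ → ℕ → ℕ → ℕ × ℕ
  | 0, _, _ => (1, 1)
  | k + 1, i, j =>
    let v := matsXO k (i % 2 ^ k) (j % 2 ^ k)
    if i / 2 ^ k % 2 = 0 then
      if j / 2 ^ k % 2 = 0 then (v.1, v.2) else (v.2, v.1)
    else
      if j / 2 ^ k % 2 = 0 then (v.2, v.1) else (v.1, 4 * v.2)

/-- The matrix `X_k`. -/
def Xmat (m : ℕ) : Matrix (Fin (2 ^ m)) (Fin (2 ^ m)) ℕ :=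
  Matrix.of fun i j => (matsXO m i j).1

/-- The matrix `O_k`. -/
def Omat (m : ℕ) : Matrix (Fin (2 ^ m)) (Fin (2 ^ m)) ℕ :=
  Matrix.of fun i j => (matsXO m i j).2

/-- Entries of the quadruple `(X_k^+, X_k^-, O_k^+, O_k^-)` of `2^k × 2^k` matrices defined by
the block recursions `X_{k+1}^+ = [[X_k^+, O_k^-],[O_k^-, X_k^+]]`,
`X_{k+1}^- = [[X_k^-, O_k^+],[O_k^+, X_k^-]]`, `O_{k+1}^+ = [[O_k^+, X_k^-],[X_k^-, 4 O_k^+]]`,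
`O_{k+1}^- = [[O_k^-, X_k^+],[X_k^+, 4 O_k^-]]`, seeded with `X_0^+ = O_0^+ = [1]`,
`X_0^- = O_0^- = [0]` (the most significant bit selects the block). -/
def matsPM : ℕ → ℕ → ℕ → ℕ × ℕ × ℕ × ℕ
  | 0, _, _ => (1, 0, 1, 0)
  | k + 1, i, j =>
    let v := matsPM k (i % 2 ^ k) (j % 2 ^ k)
    match v with
    | (xp, xm, op, om) =>
      if i / 2 ^ k % 2 = 0 then
        if j / 2 ^ k % 2 = 0 then (xp, xm, op, om) else (om, op, xm, xp)
      else
        if j / 2 ^ k % 2 = 0 then (om, op, xm, xp) else (xp, xm, 4 * op, 4 * om)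

/-- The matrix `X_m^+`. -/
def Xplus (m : ℕ) : Matrix (Fin (2 ^ m)) (Fin (2 ^ m)) ℕ :=
  Matrix.of fun i j => (matsPM m i j).1
/-- The matrix `X_m^-`. -/
def Xminus (m : ℕ) : Matrix (Fin (2 ^ m)) (Fin (2 ^ m)) ℕ :=
  Matrix.of fun i j => (matsPM m i j).2.1
/-- The matrix `O_m^+`. -/
def Oplus (m : ℕ) : Matrix (Fin (2 ^ m)) (Fin (2 ^ m)) ℕ :=
  Matrix.of fun i j => (matsPM m i j).2.2.1
/-- The matrix `O_m^-`. -/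
def Ominus (m : ℕ) : Matrix (Fin (2 ^ m)) (Fin (2 ^ m)) ℕ :=
  Matrix.of fun i j => (matsPM m i j).2.2.2

/-- The boundary state (a word in `{o,x}^m`) encoded by `a : Fin (2^m)` in reverse
lexicographic order: the first position is the least significant bit. -/
def stateOf {m : ℕ} (a : Fin (2 ^ m)) : Fin m → Bool := fun r => (a : ℕ).testBit r.val

/-- The `l`-state of a mosaic. -/
def lState {m n : ℕ} (hn : 0 < n) (M : Mosaic m n) : Fin m → Bool :=
  fun i => cpL (M i ⟨0, hn⟩)
/-- The `r`-state of a mosaic. -/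
def rState {m n : ℕ} (hn : 0 < n) (M : Mosaic m n) : Fin m → Bool :=
  fun i => cpR (M i ⟨n - 1, Nat.sub_lt hn Nat.one_pos⟩)
/-- The `t`-state of a mosaic. -/
def tState {m n : ℕ} (hm : 0 < m) (M : Mosaic m n) : Fin n → Bool :=
  fun j => cpT (M ⟨0, hm⟩ j)
/-- The `b`-state of a mosaic. -/
def bState {m n : ℕ} (hm : 0 < m) (M : Mosaic m n) : Fin n → Bool :=
  fun j => cpB (M ⟨m - 1, Nat.sub_lt hm Nat.one_pos⟩ j)

/-- The state matrix `N^{(m,n)+}`: its `(a,b)` entry counts the suitably connected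
`(m,n)`-mosaics whose `t`-state equals its `b`-state, whose `l`-state is the `a`-th state
and whose `r`-state is the `b`-th state. -/
noncomputable def Nplus (m n : ℕ) (hm : 0 < m) (hn : 0 < n) :
    Matrix (Fin (2 ^ m)) (Fin (2 ^ m)) ℕ :=
  Matrix.of fun a b => Nat.card {M : Mosaic m n // SuitablyConnected M ∧
    tState hm M = bState hm M ∧ lState hn M = stateOf a ∧ rState hn M = stateOf b}

/-- The index map `α` for `tr^{(k)}`: cyclic shift by `k` positions of the `p`-bit binary
representation, i.e. `α(i) ≡ 2^k i (mod 2^p - 1)` for `0 < i < 2^p - 1`, `α(0) = 0`,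
`α(2^p-1) = 2^p-1`. -/
def alphaIdx (p k : ℕ) (i : Fin (2 ^ p)) : Fin (2 ^ p) :=
  if h : (i : ℕ) = 2 ^ p - 1 then i
  else ⟨(2 ^ k * (i : ℕ)) % (2 ^ p - 1), by
    have h1 : 0 < 2 ^ p := Nat.two_pow_pos p
    have h2 : (i : ℕ) < 2 ^ p := i.isLt
    have h3 : 0 < 2 ^ p - 1 := by omega
    have h4 := Nat.mod_lt (2 ^ k * (i : ℕ)) h3
    omega⟩

/-- The twisted trace `tr^{(k)}(A) = Σ_i A_{i+1, α(i)+1}`. -/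
def trk (p k : ℕ) (A : Matrix (Fin (2 ^ p)) (Fin (2 ^ p)) ℕ) : ℕ :=
  ∑ i, A i (alphaIdx p k i)


section Aux
variable {m n : ℕ}

lemma shiftIdx_shiftIdx (x x' : ℤ) (i : Fin m) :
    shiftIdx x' (shiftIdx x i) = shiftIdx (x + x') i := by
  have hm : (0:ℤ) < m := by exact_mod_cast i.pos
  apply Fin.ext
  simp only [shiftIdx]
  have h2 := Int.emod_nonneg ((i:ℤ) - x) (by omega : (m:ℤ) ≠ 0)
  rw [Int.toNat_of_nonneg h2]
  congr 1
  rw [Int.sub_emod (((i:ℤ) - x) % m) x', Int.emod_emod_of_dvd _ dvd_rfl,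
    ← Int.sub_emod, sub_sub]

lemma shiftIdx_congr {x x' : ℤ} (h : x % (m:ℤ) = x' % (m:ℤ)) (i : Fin m) :
    shiftIdx x i = shiftIdx x' i := by
  apply Fin.ext
  simp only [shiftIdx]
  congr 1
  rw [Int.sub_emod, h, ← Int.sub_emod]

lemma shiftIdx_zero (i : Fin m) : shiftIdx 0 i = i := by
  apply Fin.ext
  simp only [shiftIdx, sub_zero]
  rw [Int.emod_eq_of_lt (by positivity) (by exact_mod_cast i.isLt)]
  simp

lemma shiftIdx_self (i : Fin m) : shiftIdx (i : ℤ) i = ⟨0, i.pos⟩ := by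
  apply Fin.ext
  simp [shiftIdx, sub_self]

lemma tshift_tshift (x y x' y' : ℤ) (M : Mosaic m n) :
    tshift x' y' (tshift x y M) = tshift (x + x') (y + y') M := by
  funext i j
  simp only [tshift, shiftIdx_shiftIdx]
  rw [add_comm x' x, add_comm y' y]

lemma tshift_zero (M : Mosaic m n) : tshift 0 0 M = M := by
  funext i j; simp [tshift, shiftIdx_zero]

lemma tshift_congr {x x' y y' : ℤ} (hx : x % (m:ℤ) = x' % (m:ℤ))
    (hy : y % (n:ℤ) = y' % (n:ℤ)) (M : Mosaic m n) :
    tshift x y M = tshift x' y' M := by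
  funext i j
  simp only [tshift, shiftIdx_congr hx, shiftIdx_congr hy]

lemma tshift_fix_iter {x y : ℤ} {M : Mosaic m n} (h : M = tshift x y M) (a : ℕ) :
    M = tshift (a * x) (a * y) M := by
  induction a with
  | zero => simpa using (tshift_zero M).symm
  | succ a ih =>
    calc M = tshift (a*x) (a*y) M := ih
    _ = tshift (a*x) (a*y) (tshift x y M) := by rw [← h]
    _ = tshift ((a+1:ℕ)*x) ((a+1:ℕ)*y) M := by
        rw [tshift_tshift]; congr 1 <;> push_cast <;> ring

lemma tshift_fix_neg {x y : ℤ} {M : Mosaic m n} (h : M = tshift x y M) :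
    M = tshift (-x) (-y) M := by
  conv_rhs => rw [h]
  rw [tshift_tshift]
  simp only [add_neg_cancel]
  exact (tshift_zero M).symm

lemma row_all {M : Mosaic m n} (h : M = tshift 1 0 M) (k : ℤ) : M = tshift k 0 M := by
  rcases le_or_gt 0 k with hk | hk
  · have h2 := tshift_fix_iter h k.toNat
    simpa [Int.toNat_of_nonneg hk] using h2
  · have h2 := tshift_fix_iter h (-k).toNat
    have h3 : ((-k).toNat : ℤ) = -k := Int.toNat_of_nonneg (by omega)
    rw [h3] at h2
    have h4 := tshift_fix_neg (by simpa using h2)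
    simpa using h4

lemma col_all {M : Mosaic m n} (h : M = tshift 0 1 M) (k : ℤ) : M = tshift 0 k M := by
  rcases le_or_gt 0 k with hk | hk
  · have h2 := tshift_fix_iter h k.toNat
    simpa [Int.toNat_of_nonneg hk] using h2
  · have h2 := tshift_fix_iter h (-k).toNat
    have h3 : ((-k).toNat : ℤ) = -k := Int.toNat_of_nonneg (by omega)
    rw [h3] at h2
    have h4 := tshift_fix_neg (by simpa using h2)
    simpa using h4

lemma f11_iff {M : Mosaic m n} :
    IsFPeriod 1 1 M ↔ (M = tshift 1 0 M ∧ M = tshift 0 1 M) := by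
  constructor
  · rintro ⟨⟨⟨-, h1⟩, -⟩, ⟨⟨-, h2⟩, -⟩⟩
    exact ⟨by simpa using h1, by simpa using h2⟩
  · rintro ⟨h1, h2⟩
    exact ⟨⟨⟨one_pos, by simpa using h1⟩, fun a ha => ha.1⟩,
      ⟨⟨one_pos, by simpa using h2⟩, fun a ha => ha.1⟩⟩

lemma col_one {M : Mosaic m n} (hrow : M = tshift 1 0 M) {k : ℤ}
    (hk : M = tshift k 1 M) : M = tshift 0 1 M := by
  have h := row_all hrow (-k)
  calc M = tshift k 1 M := hk
  _ = tshift k 1 (tshift (-k) 0 M) := by rw [← h]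
  _ = tshift 0 1 M := by rw [tshift_tshift]; simp only [neg_add_cancel, zero_add]

lemma eq_const {M : Mosaic m n} (hm : 0 < m) (hn : 0 < n)
    (h1 : M = tshift 1 0 M) (h2 : M = tshift 0 1 M) (i : Fin m) (j : Fin n) :
    M i j = M ⟨0, hm⟩ ⟨0, hn⟩ := by
  have hr := row_all h1 (i : ℤ)
  have hc := col_all h2 (j : ℤ)
  have hij : M = tshift (i : ℤ) (j : ℤ) M := by
    calc M = tshift (i:ℤ) 0 M := hr
    _ = tshift (i:ℤ) 0 (tshift 0 (j:ℤ) M) := by rw [← hc]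
    _ = tshift (i:ℤ) (j:ℤ) M := by rw [tshift_tshift]; simp
  conv_lhs => rw [hij]
  show M (shiftIdx (i:ℤ) i) (shiftIdx (j:ℤ) j) = _
  rw [shiftIdx_self, shiftIdx_self]

end Aux

lemma row_one {p n : ℕ} (hP : p.Prime) {M : Mosaic p n} {d : ℤ}
    (hd : ¬ (p:ℤ) ∣ d) (h : M = tshift d 0 M) : M = tshift 1 0 M := by
  have hcop : IsCoprime (p:ℤ) d := (Nat.prime_iff_prime_int.mp hP).coprime_iff_not_dvd.mpr hd
  obtain ⟨u, v, huv⟩ := hcop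
  have hp0 : (0:ℤ) < p := by exact_mod_cast hP.pos
  set a : ℕ := (v % p).toNat with ha
  have hva : (a:ℤ) = v % p := Int.toNat_of_nonneg (Int.emod_nonneg v (by omega))
  have hiter := tshift_fix_iter h a
  have hmod : ((a:ℤ) * d) % p = 1 % p := by
    rw [hva, Int.mul_emod, Int.emod_emod_of_dvd _ dvd_rfl, ← Int.mul_emod]
    have hvd : v * d = 1 + (-u) * p := by linarith
    rw [hvd, Int.add_mul_emod_self_right]
  calc M = tshift ((a:ℤ) * d) ((a:ℤ) * 0) M := hiter
  _ = tshift 1 0 M := by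
      rw [mul_zero]
      exact tshift_congr hmod rfl M

lemma disj_11_1p {p : ℕ} (hP : p.Prime) {M : Mosaic p p} :
    ¬ (IsFPeriod 1 1 M ∧ IsFPeriod 1 p M) := by
  rintro ⟨h1, h2⟩
  have := h1.2.unique h2.2
  have := hP.one_lt
  omega

lemma disj_1p_pk {p : ℕ} {M : Mosaic p p} (k : ℕ) :
    ¬ (IsFPeriod 1 p M ∧ IsPk1FPeriod k M) := by
  rintro ⟨h1, h2⟩
  have hrow : M = tshift 1 0 M := by simpa using h1.1.1.2
  exact h2.1 (f11_iff.mpr ⟨hrow, col_one hrow h2.2⟩)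

lemma disj_pk_pk {p : ℕ} (hP : p.Prime) {M : Mosaic p p} {k l : ℕ}
    (hk : k < p) (hl : l < p) (hkl : k ≠ l) :
    ¬ (IsPk1FPeriod k M ∧ IsPk1FPeriod l M) := by
  rintro ⟨h1, h2⟩
  have hlinv := tshift_fix_neg h2.2
  have hdiff : M = tshift ((k:ℤ) - l) 0 M := by
    calc M = tshift (k:ℤ) 1 M := h1.2
    _ = tshift (k:ℤ) 1 (tshift (-(l:ℤ)) (-1) M) := by rw [← hlinv]
    _ = tshift ((k:ℤ) - l) 0 M := by
        rw [tshift_tshift, show (-(l:ℤ) + k) = (k:ℤ) - l by ring,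
          show ((-1:ℤ) + 1) = 0 by ring]
  have hnd : ¬ (p:ℤ) ∣ ((k:ℤ) - l) := by
    intro hdvd
    have habs : |(k:ℤ) - l| < p := by rw [abs_lt]; push_cast; omega
    have := Int.eq_zero_of_abs_lt_dvd hdvd habs
    omega
  have hrow := row_one hP hnd hdiff
  exact h1.1 (f11_iff.mpr ⟨hrow, col_one hrow h1.2⟩)

lemma count7 {p : ℕ} (hp0 : 0 < p) :
    Nat.card {M : Mosaic p p // PeriodKnot M ∧ IsFPeriod 1 1 M} = 7 := by
  have hconst : ∀ (M : Mosaic p p), IsFPeriod 1 1 M → ∀ i j, M i j = M ⟨0, hp0⟩ ⟨0, hp0⟩ := by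
    intro M hM i j
    obtain ⟨h1, h2⟩ := f11_iff.mp hM
    exact eq_const hp0 hp0 h1 h2 i j
  have hcard : Nat.card {M : Mosaic p p // PeriodKnot M ∧ IsFPeriod 1 1 M} =
      Nat.card {c : Fin 11 // cpL c = cpR c ∧ cpT c = cpB c} := by
    apply Nat.card_congr
    refine
      { toFun := fun M => ⟨M.1 ⟨0, hp0⟩ ⟨0, hp0⟩, ?_, ?_⟩
        invFun := fun c => ⟨fun _ _ => c.1, ?_, ?_⟩
        left_inv := ?_, right_inv := ?_ }
    · have h := M.2.1.2.1 ⟨0, hp0⟩ ⟨0, hp0⟩ ⟨p - 1, Nat.sub_lt hp0 Nat.one_pos⟩ rfl rfl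
      rwa [hconst M.1 M.2.2 ⟨0, hp0⟩ ⟨p - 1, Nat.sub_lt hp0 Nat.one_pos⟩] at h
    · have h := M.2.1.2.2 ⟨0, hp0⟩ ⟨p - 1, Nat.sub_lt hp0 Nat.one_pos⟩ ⟨0, hp0⟩ rfl rfl
      rwa [hconst M.1 M.2.2 ⟨p - 1, Nat.sub_lt hp0 Nat.one_pos⟩ ⟨0, hp0⟩] at h
    · exact ⟨⟨fun i j h => c.2.1.symm, fun i h j => c.2.2.symm⟩,
        ⟨fun i j j' hj hj' => c.2.1, fun i i' j hi hi' => c.2.2⟩⟩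
    · exact f11_iff.mpr ⟨rfl, rfl⟩
    · intro M
      apply Subtype.ext
      funext i j
      exact (hconst M.1 M.2.2 i j).symm
    · intro c
      apply Subtype.ext
      rfl
  rw [hcard, Nat.card_eq_fintype_card]
  decide

/-- For a prime `p`, the period knot `(p,p)`-mosaics are partitioned:
`D_P^{(p,p)} = d_{p²} + d_{1,p} + Σ_{k=0}^{p-1} d_{p_{(k,1)}} + 7`, where `7 = d_{1,1}`;
in particular the classes of `(1,1)`-, `(1,p)`- and `p_{(k,1)}`-f.period mosaics are
pairwise disjoint. -/
theorem period_prime_square_partition (p : ℕ) (hP : p.Prime) :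
    DP p p = dPsq p + dFP p p 1 p + (∑ k ∈ Finset.range p, dPk p k) + 7 ∧
    dFP p p 1 1 = 7 ∧
    ∀ M : Mosaic p p, PeriodKnot M →
      (¬ (IsFPeriod 1 1 M ∧ IsFPeriod 1 p M)) ∧
      (∀ k < p, ¬ (IsFPeriod 1 1 M ∧ IsPk1FPeriod k M)) ∧
      (∀ k < p, ¬ (IsFPeriod 1 p M ∧ IsPk1FPeriod k M)) ∧
      (∀ k l : ℕ, k < p → l < p → k ≠ l → ¬ (IsPk1FPeriod k M ∧ IsPk1FPeriod l M)) := by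
  classical
  have hp0 : 0 < p := hP.pos
  refine ⟨?_, count7 hp0, fun M _ => ⟨disj_11_1p hP, fun k _ h => h.2.1 h.1,
    fun k _ => disj_1p_pk k, fun k l hk hl hkl => disj_pk_pk hP hk hl hkl⟩⟩
  have cardEq : ∀ (P : Mosaic p p → Prop),
      Nat.card {M : Mosaic p p // P M} = ∑ M : Mosaic p p, if P M then 1 else 0 := by
    intro P
    rw [Nat.card_eq_fintype_card, Fintype.card_subtype, Finset.card_filter]
  have h7 : (7:ℕ) = Nat.card {M : Mosaic p p // PeriodKnot M ∧ IsFPeriod 1 1 M} :=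
    (count7 hp0).symm
  unfold DP dPsq dFP dPk
  rw [h7]
  simp only [cardEq]
  rw [Finset.sum_comm, ← Finset.sum_add_distrib, ← Finset.sum_add_distrib,
    ← Finset.sum_add_distrib]
  apply Finset.sum_congr rfl
  intro M _
  by_cases hPK : PeriodKnot M
  · by_cases h11 : IsFPeriod 1 1 M
    · have hB : ¬ IsFPeriod 1 p M := fun h => disj_11_1p hP ⟨h11, h⟩
      have hC : ∀ k, ¬ IsPk1FPeriod k M := fun k h => h.1 h11
      simp [hPK, h11, hB, hC]
    · by_cases h1p : IsFPeriod 1 p M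
      · have hC : ∀ k, ¬ IsPk1FPeriod k M := fun k h => disj_1p_pk k ⟨h1p, h⟩
        simp [hPK, h11, h1p, hC]
      · by_cases hex : ∃ k, k < p ∧ IsPk1FPeriod k M
        · obtain ⟨k0, hk0p, hk0⟩ := hex
          have hA : ¬ ∀ k < p, ¬ IsPk1FPeriod k M := fun h => h k0 hk0p hk0
          have hone : ∑ x ∈ Finset.range p,
              (if IsPk1FPeriod x M then (1:ℕ) else 0) = 1 := by
            rw [Finset.sum_eq_single_of_mem k0 (Finset.mem_range.mpr hk0p)]
            · exact if_pos hk0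
            · intro b hb hbne
              exact if_neg fun h =>
                disj_pk_pk hP (Finset.mem_range.mp hb) hk0p hbne ⟨h, hk0⟩
          simp [hPK, h11, h1p, hA, hone]
        · have hA : ∀ k < p, ¬ IsPk1FPeriod k M := fun k hk hpk => hex ⟨k, hk, hpk⟩
          have hz : ∑ x ∈ Finset.range p,
              (if IsPk1FPeriod x M then (1:ℕ) else 0) = 0 :=
            Finset.sum_eq_zero fun k hk =>
              if_neg fun h => hex ⟨k, Finset.mem_range.mp hk, h⟩
          simp [hPK, h11, h1p, hz]
          exact hA
  · simp [hPK]
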